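/- arXiv:2302.00218 — 2 statements merged into one kernel-verified Lean document; each statement's English description precedes it below -/
import Mathlib

section
/- The map A ↦ (U ↦ tr(AU)) is an isometric linear bijection from the trace class S₁(n) onto the subspace of C(U(n)) spanned by the coordinate functions e_{ij}, where S₁(n) carries the trace norm and the subspace carries the supremum norm over U(n). -/
open MeasureTheory Matrix
open scoped ComplexOrder InnerProductSpace

/-- The trace norm (Schatten 1-norm) of a complex `n × n` matrix: the trace of the positive
semidefinite square root of `Aᴴ A`. -/
noncomputable def traceNorm (n : ℕ) (A : Matrix (Fin n) (Fin n) ℂ) : ℝ :=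
  (((Matrix.posSemidef_conjTranspose_mul_self A).1.eigenvectorUnitary.1 *
      diagonal (((↑) : ℝ → ℂ) ∘ (√·) ∘ (Matrix.posSemidef_conjTranspose_mul_self A).1.eigenvalues) *
      (star (Matrix.posSemidef_conjTranspose_mul_self A).1.eigenvectorUnitary :
        Matrix (Fin n) (Fin n) ℂ)).trace).re

lemma traceNorm_eq_sum (n : ℕ) (A : Matrix (Fin n) (Fin n) ℂ) :
    traceNorm n A =
      ∑ i, Real.sqrt ((Matrix.posSemidef_conjTranspose_mul_self A).1.eigenvalues i) := by
  set hH := Matrix.posSemidef_conjTranspose_mul_self A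
  have h1 : (star hH.1.eigenvectorUnitary.1 : Matrix (Fin n) (Fin n) ℂ) *
      hH.1.eigenvectorUnitary.1 = 1 := Unitary.coe_star_mul_self _
  rw [traceNorm, Matrix.trace_mul_cycle, h1,
    Matrix.one_mul, Matrix.trace_diagonal]
  simp [Complex.ofReal_re]

lemma traceNorm_nonneg (n : ℕ) (A : Matrix (Fin n) (Fin n) ℂ) : 0 ≤ traceNorm n A := by
  rw [traceNorm_eq_sum]
  exact Finset.sum_nonneg fun i _ => Real.sqrt_nonneg _

lemma main_aux (n : ℕ) (A : Matrix (Fin n) (Fin n) ℂ) :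
    (∀ U ∈ Matrix.unitaryGroup (Fin n) ℂ,
        ‖(A * U).trace‖ ≤ traceNorm n A) ∧
    (∃ U ∈ Matrix.unitaryGroup (Fin n) ℂ,
        (A * U).trace = (traceNorm n A : ℂ)) := by
  classical
  set hH := Matrix.posSemidef_conjTranspose_mul_self A with hHdef
  set W : Matrix (Fin n) (Fin n) ℂ := hH.1.eigenvectorUnitary.1 with hWdef
  have hWmem : W ∈ Matrix.unitaryGroup (Fin n) ℂ := hH.1.eigenvectorUnitary.2
  set lam : Fin n → ℝ := hH.1.eigenvalues with hlamdef
  have hlam : ∀ i, 0 ≤ lam i := fun i => hH.eigenvalues_nonneg i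
  set B : Matrix (Fin n) (Fin n) ℂ := A * W with hBdef
  set v : Fin n → EuclideanSpace ℂ (Fin n) :=
    fun i => (WithLp.equiv 2 (Fin n → ℂ)).symm (fun k => B k i) with hvdef
  have hBB : Bᴴ * B = Matrix.diagonal (fun i => (lam i : ℂ)) := by
    have h : star W * (Aᴴ * A) * W = Matrix.diagonal (RCLike.ofReal ∘ lam) := by
      have := hH.1.conjStarAlgAut_star_eigenvectorUnitary
      rwa [Unitary.conjStarAlgAut_star_apply] at this
    rw [hBdef, Matrix.conjTranspose_mul, Matrix.mul_assoc, ← Matrix.mul_assoc Aᴴ A W,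
      ← Matrix.mul_assoc]
    calc Wᴴ * (Aᴴ * A) * W = star W * (Aᴴ * A) * W := by
          rw [Matrix.star_eq_conjTranspose]
      _ = Matrix.diagonal (RCLike.ofReal ∘ lam) := h
      _ = Matrix.diagonal (fun i => (lam i : ℂ)) := rfl
  have hvv : ∀ i j, ⟪v i, v j⟫_ℂ = if i = j then (lam i : ℂ) else 0 := by
    intro i j
    have h := congrFun (congrFun hBB i) j
    rw [Matrix.mul_apply] at h
    simp only [Matrix.conjTranspose_apply, Matrix.diagonal_apply] at h
    rw [PiLp.inner_apply]
    simp only [RCLike.inner_apply']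
    exact h
  have hnv : ∀ i, ‖v i‖ = Real.sqrt (lam i) := by
    intro i
    have h : (⟪v i, v i⟫_ℂ) = ((‖v i‖ : ℝ) : ℂ) ^ 2 := by
      rw [inner_self_eq_norm_sq_to_K]; norm_cast
    rw [hvv i i, if_pos rfl] at h
    have h2 : lam i = ‖v i‖ ^ 2 := by exact_mod_cast h
    rw [h2, Real.sqrt_sq (norm_nonneg _)]
  -- the key trace formula
  have key : ∀ Q : Matrix (Fin n) (Fin n) ℂ,
      (Qᴴ * B).trace = ∑ i, ⟪(WithLp.equiv 2 (Fin n → ℂ)).symm (fun k => Q k i), v i⟫_ℂ := by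
    intro Q
    rw [Matrix.trace]
    refine Finset.sum_congr rfl fun i _ => ?_
    rw [Matrix.diag_apply, Matrix.mul_apply, PiLp.inner_apply]
    simp only [Matrix.conjTranspose_apply, RCLike.inner_apply']
    rfl
  have colnorm : ∀ Q ∈ Matrix.unitaryGroup (Fin n) ℂ, ∀ i,
      ‖(WithLp.equiv 2 (Fin n → ℂ)).symm (fun k => Q k i)‖ = 1 := by
    intro Q hQ i
    have h1 : star Q * Q = 1 := (Matrix.mem_unitaryGroup_iff'.mp hQ)
    have h := congrFun (congrFun h1 i) i
    rw [Matrix.mul_apply] at h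
    simp only [Matrix.star_apply, Matrix.one_apply_eq] at h
    have h2 : (⟪(WithLp.equiv 2 (Fin n → ℂ)).symm (fun k => Q k i),
        (WithLp.equiv 2 (Fin n → ℂ)).symm (fun k => Q k i)⟫_ℂ) = 1 := by
      rw [PiLp.inner_apply]
      simp only [RCLike.inner_apply']
      exact h
    have h3 := inner_self_eq_norm_sq_to_K (𝕜 := ℂ)
      ((WithLp.equiv 2 (Fin n → ℂ)).symm (fun k => Q k i))
    rw [h2] at h3
    have h4 : (1 : ℝ) = ‖(WithLp.equiv 2 (Fin n → ℂ)).symm (fun k => Q k i)‖ ^ 2 := by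
      have h5 : ((1 : ℝ) : ℂ) = ((‖(WithLp.equiv 2 (Fin n → ℂ)).symm (fun k => Q k i)‖ ^ 2 : ℝ) : ℂ) := by
        push_cast
        exact h3
      exact_mod_cast h5
    nlinarith [norm_nonneg ((WithLp.equiv 2 (Fin n → ℂ)).symm (fun k => Q k i)),
      sq_nonneg (‖(WithLp.equiv 2 (Fin n → ℂ)).symm (fun k => Q k i)‖ - 1)]
  have hTN : traceNorm n A = ∑ i, Real.sqrt (lam i) := traceNorm_eq_sum n A
  constructor
  · intro U hU
    set Q : Matrix (Fin n) (Fin n) ℂ := star U * W with hQdef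
    have hQmem : Q ∈ Matrix.unitaryGroup (Fin n) ℂ := mul_mem (Unitary.star_mem hU) hWmem
    have htr : (A * U).trace = (Qᴴ * B).trace := by
      have hWW : W * star W = 1 := Matrix.mem_unitaryGroup_iff.mp hWmem
      have hWW' : W * Wᴴ = 1 := by rw [← Matrix.star_eq_conjTranspose]; exact hWW
      have hQB : Qᴴ * B = Wᴴ * (U * A * W) := by
        rw [hQdef, hBdef, Matrix.conjTranspose_mul, Matrix.star_eq_conjTranspose,
          Matrix.conjTranspose_conjTranspose]
        noncomm_ring
      rw [hQB]
      calc (A * U).trace = (U * A).trace := Matrix.trace_mul_comm _ _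
        _ = (U * A * (W * Wᴴ)).trace := by rw [hWW', Matrix.mul_one]
        _ = (U * A * W * Wᴴ).trace := by rw [Matrix.mul_assoc (U * A) W Wᴴ]
        _ = (Wᴴ * (U * A * W)).trace := (Matrix.trace_mul_comm _ _).symm
    rw [htr, key Q]
    calc ‖(∑ i, ⟪(WithLp.equiv 2 (Fin n → ℂ)).symm (fun k => Q k i), v i⟫_ℂ)‖
        ≤ ∑ i, ‖(⟪(WithLp.equiv 2 (Fin n → ℂ)).symm (fun k => Q k i), v i⟫_ℂ)‖ := by
          simpa only using
            norm_sum_le Finset.univ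
              (fun i => ⟪(WithLp.equiv 2 (Fin n → ℂ)).symm (fun k => Q k i), v i⟫_ℂ)
      _ ≤ ∑ i, Real.sqrt (lam i) := by
          refine Finset.sum_le_sum fun i _ => ?_
          calc ‖(⟪(WithLp.equiv 2 (Fin n → ℂ)).symm (fun k => Q k i), v i⟫_ℂ)‖
              = ‖(⟪(WithLp.equiv 2 (Fin n → ℂ)).symm (fun k => Q k i), v i⟫_ℂ)‖ := rfl
            _ ≤ ‖(WithLp.equiv 2 (Fin n → ℂ)).symm (fun k => Q k i)‖ * ‖v i‖ :=
                norm_inner_le_norm _ _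
            _ = Real.sqrt (lam i) := by rw [colnorm Q hQmem i, hnv i, one_mul]
      _ = traceNorm n A := hTN.symm
  · -- equality case
    set s : Set (Fin n) := {i | lam i ≠ 0} with hsdef
    set p : Fin n → EuclideanSpace ℂ (Fin n) :=
      fun i => ((Real.sqrt (lam i) : ℂ))⁻¹ • v i with hpdef
    have hp : Orthonormal ℂ (s.restrict p) := by
      rw [orthonormal_iff_ite]
      rintro ⟨i, hi⟩ ⟨j, hj⟩
      simp only [Set.restrict, Set.domRestrict_apply, hpdef]
      rw [inner_smul_left, inner_smul_right, hvv i j, map_inv₀, Complex.conj_ofReal]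
      by_cases hij : i = j
      · subst hij
        rw [if_pos rfl, if_pos (Subtype.ext rfl)]
        have hl : 0 < lam i := lt_of_le_of_ne (hlam i) (Ne.symm hi)
        have hs : (Real.sqrt (lam i) : ℂ) ≠ 0 := by
          simp only [ne_eq, Complex.ofReal_eq_zero]
          positivity
        rw [show ((lam i : ℂ)) = (Real.sqrt (lam i) : ℂ) * (Real.sqrt (lam i) : ℂ) by
          rw [← Complex.ofReal_mul, Real.mul_self_sqrt (hlam i)]]
        field_simp
      · rw [if_neg hij, if_neg (fun h => hij (congrArg Subtype.val h))]
        simp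
    obtain ⟨b, hb⟩ := hp.exists_orthonormalBasis_extension_of_card_eq
      (by simp [finrank_euclideanSpace]) 
    set Q0 : Matrix (Fin n) (Fin n) ℂ := Matrix.of (fun k i => b i k) with hQ0def
    have hQ0mem : Q0 ∈ Matrix.unitaryGroup (Fin n) ℂ := by
      rw [Matrix.mem_unitaryGroup_iff']
      ext i j
      rw [Matrix.mul_apply, Matrix.one_apply]
      have := b.orthonormal
      rw [orthonormal_iff_ite] at this
      have h := this i j
      rw [PiLp.inner_apply] at h
      simp only [RCLike.inner_apply'] at h
      simp only [Matrix.star_apply]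
      exact h
    refine ⟨W * Q0ᴴ, mul_mem hWmem (Unitary.star_mem hQ0mem), ?_⟩
    have htr : (A * (W * Q0ᴴ)).trace = (Q0ᴴ * B).trace := by
      rw [← Matrix.mul_assoc, ← hBdef, Matrix.trace_mul_comm]
    rw [htr, key Q0]
    have hterm : ∀ i, ⟪(WithLp.equiv 2 (Fin n → ℂ)).symm (fun k => Q0 k i), v i⟫_ℂ
        = ((Real.sqrt (lam i) : ℝ) : ℂ) := by
      intro i
      have hcol : (WithLp.equiv 2 (Fin n → ℂ)).symm (fun k => Q0 k i) = b i := rfl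
      rw [hcol]
      by_cases hi : i ∈ s
      · rw [hb i hi, hpdef]
        simp only
        rw [inner_smul_left, hvv i i, if_pos rfl, map_inv₀, Complex.conj_ofReal]
        have hl : 0 < lam i := lt_of_le_of_ne (hlam i) (Ne.symm hi)
        have hs : (Real.sqrt (lam i) : ℂ) ≠ 0 := by
          simp only [ne_eq, Complex.ofReal_eq_zero]
          positivity
        rw [show ((lam i : ℂ)) = (Real.sqrt (lam i) : ℂ) * (Real.sqrt (lam i) : ℂ) by
          rw [← Complex.ofReal_mul, Real.mul_self_sqrt (hlam i)]]
        field_simp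
      · have hl0 : lam i = 0 := by simpa [hsdef] using hi
        have hv0 : v i = 0 := by
          have h0 : ⟪v i, v i⟫_ℂ = 0 := by rw [hvv i i]; simp [hl0]
          exact inner_self_eq_zero.mp h0
        rw [hv0, inner_zero_right, hl0, Real.sqrt_zero, Complex.ofReal_zero]
    rw [Finset.sum_congr rfl (fun i _ => hterm i), hTN]
    push_cast
    ring

lemma eq_zero_of_traceNorm_eq_zero {n : ℕ} {A : Matrix (Fin n) (Fin n) ℂ}
    (h : traceNorm n A = 0) : A = 0 := by
  classical
  set hH := Matrix.posSemidef_conjTranspose_mul_self A with hHdef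
  rw [traceNorm_eq_sum] at h
  have hz : ∀ i, hH.1.eigenvalues i = 0 := by
    intro i
    have hsq : Real.sqrt (hH.1.eigenvalues i) = 0 := by
      have := (Finset.sum_eq_zero_iff_of_nonneg
        (fun i _ => Real.sqrt_nonneg (hH.1.eigenvalues i))).mp h i (Finset.mem_univ i)
      exact this
    have h0 := hH.eigenvalues_nonneg i
    nlinarith [Real.sq_sqrt h0, hsq]
  have hH0 : Aᴴ * A = 0 := by
    have hspec := hH.1.spectral_theorem
    rw [show Matrix.diagonal (RCLike.ofReal ∘ hH.1.eigenvalues) = (0 : Matrix (Fin n) (Fin n) ℂ) by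
      ext i j
      simp [Matrix.diagonal_apply, hz, Function.comp]] at hspec
    simpa using hspec
  exact Matrix.conjTranspose_mul_self_eq_zero.mp hH0

noncomputable def PhiMap (n : ℕ) :
    Matrix (Fin n) (Fin n) ℂ →ₗ[ℂ] C(Matrix.unitaryGroup (Fin n) ℂ, ℂ) where
  toFun A := ⟨fun U => (A * U.1).trace,
    (continuous_const.matrix_mul continuous_subtype_val).matrix_trace⟩
  map_add' A B := by
    ext U
    simp [Matrix.add_mul]
  map_smul' c A := by
    ext U
    simp [Matrix.smul_mul]

lemma trace_stdBasisMatrix_mul {n : ℕ} (i j : Fin n) (U : Matrix (Fin n) (Fin n) ℂ) :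
    (Matrix.single i j 1 * U).trace = U j i := by
  classical
  rw [Matrix.trace]
  rw [Finset.sum_eq_single i]
  · rw [Matrix.diag_apply, Matrix.single_mul_apply_same, one_mul]
  · intro k _ hk
    simp [Matrix.diag_apply, hk]
  · intro h
    exact absurd (Finset.mem_univ i) h

/-- The map `A ↦ (U ↦ tr (A U))` is an isometric linear bijection from the
trace class `S₁(n)` onto the subspace of `C(U(n))` spanned by the coordinate functions
`e_{ij}`, where `S₁(n)` carries the trace norm and the subspace carries the supremum norm
over `U(n)`. -/
theorem traceClass_isometric_span_coordinate_functions (n : ℕ) :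
    ∃ Φ : Matrix (Fin n) (Fin n) ℂ →ₗ[ℂ] C(Matrix.unitaryGroup (Fin n) ℂ, ℂ),
      (∀ (A : Matrix (Fin n) (Fin n) ℂ) (U : Matrix.unitaryGroup (Fin n) ℂ),
        Φ A U = Matrix.trace (A * U.1)) ∧
      Function.Injective Φ ∧
      Set.range Φ = (Submodule.span ℂ {g : C(Matrix.unitaryGroup (Fin n) ℂ, ℂ) |
        ∃ i j, ∀ U : Matrix.unitaryGroup (Fin n) ℂ, g U = U.1 i j} : Set _) ∧
      (∀ A : Matrix (Fin n) (Fin n) ℂ,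
        (⨆ U : Matrix.unitaryGroup (Fin n) ℂ, ‖Φ A U‖) = traceNorm n A) := by
  classical
  haveI : Nonempty (Matrix.unitaryGroup (Fin n) ℂ) := ⟨1⟩
  have hPhi : ∀ (A : Matrix (Fin n) (Fin n) ℂ) (U : Matrix.unitaryGroup (Fin n) ℂ),
      PhiMap n A U = (A * U.1).trace := fun A U => rfl
  have hnorm : ∀ A : Matrix (Fin n) (Fin n) ℂ,
      (⨆ U : Matrix.unitaryGroup (Fin n) ℂ, ‖PhiMap n A U‖) = traceNorm n A := by
    intro A
    obtain ⟨hub, U0, hU0mem, hU0⟩ := main_aux n A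
    have hbdd : BddAbove (Set.range fun U : Matrix.unitaryGroup (Fin n) ℂ =>
        ‖PhiMap n A U‖) := by
      refine ⟨traceNorm n A, ?_⟩
      rintro x ⟨U, rfl⟩
      exact hub U.1 U.2
    apply le_antisymm
    · exact ciSup_le fun U => hub U.1 U.2
    · have heq : ‖PhiMap n A ⟨U0, hU0mem⟩‖ = traceNorm n A := by
        rw [hPhi]
        simp only
        rw [hU0, Complex.norm_real, Real.norm_eq_abs, abs_of_nonneg (traceNorm_nonneg n A)]
      calc traceNorm n A = ‖PhiMap n A ⟨U0, hU0mem⟩‖ := heq.symm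
        _ ≤ _ := le_ciSup hbdd (⟨U0, hU0mem⟩ : Matrix.unitaryGroup (Fin n) ℂ)
  refine ⟨PhiMap n, hPhi, ?_, ?_, hnorm⟩
  · -- injectivity
    rw [injective_iff_map_eq_zero]
    intro A hA
    have h0 : traceNorm n A = 0 := by
      rw [← hnorm A]
      have hz : ∀ U : Matrix.unitaryGroup (Fin n) ℂ, ‖PhiMap n A U‖ = 0 := by
        intro U
        rw [hA]
        simp
      simp only [hz]
      exact ciSup_const
    exact eq_zero_of_traceNorm_eq_zero h0
  · -- range
    have hr : LinearMap.range (PhiMap n) =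
        Submodule.span ℂ {g : C(Matrix.unitaryGroup (Fin n) ℂ, ℂ) |
          ∃ i j, ∀ U : Matrix.unitaryGroup (Fin n) ℂ, g U = U.1 i j} := by
      apply le_antisymm
      · rintro g ⟨A, rfl⟩
        have hdecomp : A = ∑ i, ∑ j, A i j • Matrix.single i j (1 : ℂ) := by
          conv_lhs => rw [Matrix.matrix_eq_sum_single A]
          refine Finset.sum_congr rfl fun i _ => Finset.sum_congr rfl fun j _ => ?_
          rw [Matrix.smul_single, smul_eq_mul, mul_one]
        rw [hdecomp, map_sum]
        refine Submodule.sum_mem _ fun i _ => ?_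
        rw [map_sum]
        refine Submodule.sum_mem _ fun j _ => ?_
        rw [_root_.map_smul]
        refine Submodule.smul_mem _ _ (Submodule.subset_span ?_)
        exact ⟨j, i, fun U => by
          rw [hPhi]
          exact trace_stdBasisMatrix_mul i j U.1⟩
      · rw [Submodule.span_le]
        rintro g ⟨i, j, hg⟩
        refine ⟨Matrix.single j i 1, ?_⟩
        ext U
        rw [hPhi, trace_stdBasisMatrix_mul j i U.1, hg U]
    rw [← hr, LinearMap.coe_range]
end

section
/- If the subspaces H_{(1,0)} = span{U ↦ u_{ij}} and H_{(0,1)} = span{U ↦ conj(u_{ij})} of L²(U(n)) are orthogonal, then the orthogonal projection onto their direct sum is given by convolution with n·tr + n·conj(tr), and its norm as an operator from C(U(n)) onto the sum equals 2n ∫_{U(n)} |Re(tr(V))| dV. -/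
set_option linter.unusedSectionVars false
set_option maxHeartbeats 1000000

open MeasureTheory Matrix Complex

namespace Proj19

variable {n : ℕ} [MeasurableSpace (Matrix.unitaryGroup (Fin n) ℂ)]
  [BorelSpace (Matrix.unitaryGroup (Fin n) ℂ)]
  (μ : Measure (Matrix.unitaryGroup (Fin n) ℂ))
  [μ.IsHaarMeasure] [IsProbabilityMeasure μ]

local notation "G" => Matrix.unitaryGroup (Fin n) ℂ








lemma cont_entry (i j : Fin n) : Continuous (fun U : G => U.1 i j) :=
  (continuous_apply_apply i j).comp continuous_subtype_val

lemma bdd_entry (U : G) (i j : Fin n) : ‖U.1 i j‖ ≤ 1 :=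
  entry_norm_bound_of_unitary U.2 i j

lemma cont_centry (i j : Fin n) : Continuous (fun U : G => (starRingEnd ℂ) (U.1 i j)) :=
  Complex.continuous_conj.comp (cont_entry i j)

lemma bdd_centry (U : G) (i j : Fin n) : ‖(starRingEnd ℂ) (U.1 i j)‖ ≤ 1 := by
  rw [RCLike.norm_conj]; exact bdd_entry U i j

lemma integrable_of_bdd {g : G → ℂ} (hc : Continuous g) (C : ℝ)
    (hb : ∀ x, ‖g x‖ ≤ C) : Integrable g μ :=
  (integrable_const C).mono' hc.aestronglyMeasurable (Filter.Eventually.of_forall hb)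

lemma int_ee (i j k l : Fin n) :
    Integrable (fun V : G => V.1 i j * (starRingEnd ℂ) (V.1 k l)) μ := by
  refine integrable_of_bdd μ ?_ 1 ?_
  · exact (cont_entry i j).mul (Complex.continuous_conj.comp (cont_entry k l))
  · intro x
    rw [norm_mul, RCLike.norm_conj]
    exact mul_le_one₀ (bdd_entry x i j) (norm_nonneg _) (bdd_entry x k l)

lemma invar (j l : Fin n) (W : G) (i k : Fin n) :
    (∫ V : G, V.1 i j * (starRingEnd ℂ) (V.1 k l) ∂μ)
      = ∑ a : Fin n, ∑ b : Fin n, W.1 i a * (starRingEnd ℂ) (W.1 k b)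
          * ∫ V : G, V.1 a j * (starRingEnd ℂ) (V.1 b l) ∂μ := by
  have h1 := (integral_mul_left_eq_self (μ := μ)
    (fun V : G => V.1 i j * (starRingEnd ℂ) (V.1 k l)) W).symm
  rw [h1]
  have h2 : ∀ V : G, (W * V).1 i j * (starRingEnd ℂ) ((W * V).1 k l)
      = ∑ a : Fin n, ∑ b : Fin n, W.1 i a * (starRingEnd ℂ) (W.1 k b)
          * (V.1 a j * (starRingEnd ℂ) (V.1 b l)) := by
    intro V
    rw [Matrix.UnitaryGroup.mul_val, Matrix.mul_apply, Matrix.mul_apply, map_sum,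
      Finset.sum_mul_sum]
    refine Finset.sum_congr rfl fun a _ => Finset.sum_congr rfl fun b _ => ?_
    rw [RingHom.map_mul (starRingEnd ℂ)]
    ring
  simp only [h2]
  rw [integral_finset_sum]
  · refine Finset.sum_congr rfl fun a _ => ?_
    rw [integral_finset_sum]
    · exact Finset.sum_congr rfl fun b _ => (MeasureTheory.integral_const_mul _ _)
    · intro b _
      exact (int_ee μ a j b l).const_mul _
  · intro a _
    exact integrable_finset_sum _ fun b _ => (int_ee μ a j b l).const_mul _



lemma diag_mem (d : Fin n → ℂ) (hd : ∀ a, d a * (starRingEnd ℂ) (d a) = 1) :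
    Matrix.diagonal d ∈ Matrix.unitaryGroup (Fin n) ℂ := by
  rw [Matrix.mem_unitaryGroup_iff]
  rw [Matrix.star_eq_conjTranspose, Matrix.diagonal_conjTranspose,
    Matrix.diagonal_mul_diagonal]
  have : (fun i => d i * star d i) = fun _ => (1 : ℂ) := by
    funext a
    simpa using hd a
  rw [this, Matrix.diagonal_one]

def permU (σ : Equiv.Perm (Fin n)) : Matrix (Fin n) (Fin n) ℂ :=
  Matrix.of fun a b => if a = σ b then 1 else 0

lemma permU_mem (σ : Equiv.Perm (Fin n)) : permU σ ∈ Matrix.unitaryGroup (Fin n) ℂ := by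
  rw [Matrix.mem_unitaryGroup_iff']
  ext b c
  rw [Matrix.mul_apply, Matrix.one_apply]
  have h : ∀ a : Fin n, star (permU σ) b a * (permU σ) a c
      = if a = σ b then (if b = c then (1:ℂ) else 0) else 0 := by
    intro a
    rw [Matrix.star_eq_conjTranspose, Matrix.conjTranspose_apply]
    simp only [permU, Matrix.of_apply]
    by_cases h1 : a = σ b <;> by_cases h2 : a = σ c <;>
      simp_all [EmbeddingLike.apply_eq_iff_eq]
    try exact fun h => h2 (h1.trans (congrArg σ h))
  rw [Finset.sum_congr rfl (fun a _ => h a),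
    Finset.sum_ite_eq' Finset.univ (σ b) (fun _ => if b = c then (1:ℂ) else 0)]
  simp

lemma schur (i j k l : Fin n) :
    ∫ V : G, V.1 i j * (starRingEnd ℂ) (V.1 k l) ∂μ
      = if i = k ∧ j = l then ((n : ℂ))⁻¹ else 0 := by
  set F : Fin n → Fin n → ℂ :=
    fun a b => ∫ V : G, V.1 a j * (starRingEnd ℂ) (V.1 b l) ∂μ with hF
  have hoff : ∀ a b : Fin n, a ≠ b → F a b = 0 := by
    intro a b hab
    set d : Fin n → ℂ := fun c => if c = a then Complex.I else 1 with hd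
    have hdm : Matrix.diagonal d ∈ Matrix.unitaryGroup (Fin n) ℂ := by
      refine diag_mem d fun c => ?_
      by_cases h : c = a <;> simp [hd, h, Complex.conj_I, Complex.I_mul_I]
    have h := invar μ j l ⟨Matrix.diagonal d, hdm⟩ a b
    have hsum : (∑ x : Fin n, ∑ y : Fin n,
        (Matrix.diagonal d) a x * (starRingEnd ℂ) ((Matrix.diagonal d) b y) * F x y)
        = d a * (starRingEnd ℂ) (d b) * F a b := by
      rw [Finset.sum_eq_single a]
      · rw [Finset.sum_eq_single b]
        · rw [Matrix.diagonal_apply_eq, Matrix.diagonal_apply_eq]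
        · intro y _ hy
          rw [Matrix.diagonal_apply_ne d (Ne.symm hy)]
          simp
        · intro hb; exact absurd (Finset.mem_univ b) hb
      · intro x _ hx
        rw [Finset.sum_eq_zero]
        intro y _
        rw [Matrix.diagonal_apply_ne d (Ne.symm hx)]
        simp
      · intro ha; exact absurd (Finset.mem_univ a) ha
    rw [hsum] at h
    have hda : d a = Complex.I := by simp [hd]
    have hdb : d b = 1 := by simp [hd, Ne.symm hab]
    rw [hda, hdb] at h
    simp only [_root_.map_one, mul_one] at h
    have h' : F a b = Complex.I * F a b := h
    have h2 : (1 - Complex.I) * F a b = 0 := by linear_combination h'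
    have h3 : (1 : ℂ) - Complex.I ≠ 0 := by
      rw [sub_ne_zero]
      intro hc
      have := congrArg Complex.im hc
      simp at this
    exact (mul_eq_zero.mp h2).resolve_left h3
  have hdiag : ∀ a b : Fin n, F a a = F b b := by
    intro a b
    set σ : Equiv.Perm (Fin n) := Equiv.swap a b with hσ
    have h := invar μ j l ⟨permU σ, permU_mem σ⟩ a a
    have hentry : ∀ x y : Fin n, (permU σ : Matrix (Fin n) (Fin n) ℂ) x y
        = if x = σ y then 1 else 0 := fun x y => rfl
    have hsum : (∑ x : Fin n, ∑ y : Fin n,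
        (permU σ : Matrix (Fin n) (Fin n) ℂ) a x
          * (starRingEnd ℂ) ((permU σ : Matrix (Fin n) (Fin n) ℂ) a y) * F x y)
        = F (σ⁻¹ a) (σ⁻¹ a) := by
      rw [Finset.sum_eq_single (σ⁻¹ a)]
      · rw [Finset.sum_eq_single (σ⁻¹ a)]
        · rw [hentry, if_pos (by simp)]
          simp
        · intro y _ hy
          rw [hentry a y, if_neg (by
            intro hc
            exact hy (by rw [hc]; simp)), map_zero]
          ring
        · intro hb; exact absurd (Finset.mem_univ _) hb
      · intro x _ hx
        rw [Finset.sum_eq_zero]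
        intro y _
        rw [hentry a x, if_neg (by
          intro hc
          exact hx (by rw [hc]; simp))]
        ring
      · intro ha; exact absurd (Finset.mem_univ _) ha
    rw [hsum] at h
    have : σ⁻¹ a = b := by simp [hσ, Equiv.swap_apply_left]
    rw [this] at h
    exact h
  have htr : (∑ a : Fin n, F a a) = if j = l then 1 else 0 := by
    have h1 : (∑ a : Fin n, F a a)
        = ∫ V : G, (∑ a : Fin n, V.1 a j * (starRingEnd ℂ) (V.1 a l)) ∂μ :=
      (integral_finset_sum _ (fun a _ => int_ee μ a j a l)).symm
    have h2 : ∀ V : G, (∑ a : Fin n, V.1 a j * (starRingEnd ℂ) (V.1 a l))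
        = if j = l then 1 else 0 := by
      intro V
      have hu := V.2.1
      have h3 := Matrix.ext_iff.mpr hu l j
      rw [Matrix.mul_apply] at h3
      simp only [Matrix.star_eq_conjTranspose, Matrix.conjTranspose_apply] at h3
      rw [Matrix.one_apply] at h3
      calc (∑ a : Fin n, V.1 a j * (starRingEnd ℂ) (V.1 a l))
          = ∑ a : Fin n, star (V.1 a l) * V.1 a j :=
            Finset.sum_congr rfl fun a _ => by rw [mul_comm]; rfl
        _ = if l = j then 1 else 0 := h3
        _ = if j = l then 1 else 0 := by
            by_cases hc : j = l
            · simp [hc]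
            · rw [if_neg (fun h => hc h.symm), if_neg hc]
    rw [h1, integral_congr_ae (Filter.Eventually.of_forall h2)]
    simp
  have hcard : (∑ a : Fin n, F a a) = (n : ℂ) * F i i := by
    rw [Finset.sum_congr rfl (fun a _ => hdiag a i)]
    simp [Finset.sum_const, Finset.card_univ]
  have hn : (n : ℂ) ≠ 0 := by
    have : 0 < n := i.pos
    exact_mod_cast Nat.cast_ne_zero.mpr this.ne'
  by_cases hik : i = k
  · subst hik
    by_cases hjl : j = l
    · subst hjl
      rw [if_pos ⟨rfl, rfl⟩]
      have : (n : ℂ) * F i i = 1 := by rw [← hcard, htr, if_pos rfl]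
      field_simp
      linear_combination this
    · rw [if_neg (by tauto)]
      have : (n : ℂ) * F i i = 0 := by rw [← hcard, htr, if_neg hjl]
      exact (mul_eq_zero.mp this).resolve_left hn
  · rw [if_neg (by tauto)]
    exact hoff i k hik






lemma trace_expand (U V : G) : Matrix.trace (U.1 * (V.1)ᴴ)
    = ∑ a : Fin n, ∑ b : Fin n, U.1 a b * (starRingEnd ℂ) (V.1 a b) := by
  rw [Matrix.trace]
  refine Finset.sum_congr rfl fun a _ => ?_
  rw [Matrix.diag_apply, Matrix.mul_apply]
  refine Finset.sum_congr rfl fun b _ => ?_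
  rw [Matrix.conjTranspose_apply]
  rfl

lemma integrable_mul_bdd {f g : G → ℂ} (hf : Integrable f μ) (hg : Continuous g)
    (C : ℝ) (hb : ∀ x, ‖g x‖ ≤ C) : Integrable (fun x => f x * g x) μ := by
  have := hf.bdd_mul hg.aestronglyMeasurable (Filter.Eventually.of_forall hb)
  simpa [mul_comm] using this

lemma key_pointwise (f : G → ℂ) (U : G) (V : G) :
    f V * ((n : ℂ) * Matrix.trace (U.1 * (V.1)ᴴ)
        + (n : ℂ) * (starRingEnd ℂ) (Matrix.trace (U.1 * (V.1)ᴴ)))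
    = (∑ a : Fin n, ∑ b : Fin n, ((n : ℂ) * U.1 a b) * (f V * (starRingEnd ℂ) (V.1 a b)))
      + (∑ a : Fin n, ∑ b : Fin n,
          ((n : ℂ) * (starRingEnd ℂ) (U.1 a b)) * (f V * V.1 a b)) := by
  rw [trace_expand]
  rw [map_sum (starRingEnd ℂ)]
  simp only [map_sum (starRingEnd ℂ), RingHom.map_mul (starRingEnd ℂ), Complex.conj_conj]
  rw [mul_add, Finset.mul_sum, Finset.mul_sum, Finset.mul_sum, Finset.mul_sum]
  congr 1
  · refine Finset.sum_congr rfl fun a _ => ?_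
    rw [Finset.mul_sum, Finset.mul_sum]
    refine Finset.sum_congr rfl fun b _ => ?_
    ring
  · refine Finset.sum_congr rfl fun a _ => ?_
    rw [Finset.mul_sum, Finset.mul_sum]
    refine Finset.sum_congr rfl fun b _ => ?_
    ring

lemma proj_formula (f : G → ℂ) (hfi : Integrable f μ) (U : G) :
    (∫ V : G, f V * ((n : ℂ) * Matrix.trace (U.1 * (V.1)ᴴ)
        + (n : ℂ) * (starRingEnd ℂ) (Matrix.trace (U.1 * (V.1)ᴴ))) ∂μ)
    = (∑ a : Fin n, ∑ b : Fin n,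
        ((n : ℂ) * (∫ V : G, f V * (starRingEnd ℂ) (V.1 a b) ∂μ)) * U.1 a b)
      + (∑ a : Fin n, ∑ b : Fin n,
        ((n : ℂ) * (∫ V : G, f V * V.1 a b ∂μ)) * (starRingEnd ℂ) (U.1 a b)) := by
  have hint1 : ∀ a b : Fin n, Integrable (fun V : G => f V * (starRingEnd ℂ) (V.1 a b)) μ :=
    fun a b => integrable_mul_bdd μ hfi (Complex.continuous_conj.comp (cont_entry a b)) 1
      (fun x => by rw [RCLike.norm_conj]; exact entry_norm_bound_of_unitary x.2 a b)
  have hint2 : ∀ a b : Fin n, Integrable (fun V : G => f V * V.1 a b) μ :=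
    fun a b => integrable_mul_bdd μ hfi (cont_entry a b) 1
      (fun x => entry_norm_bound_of_unitary x.2 a b)
  simp only [key_pointwise f U]
  rw [integral_add, integral_finset_sum, integral_finset_sum]
  · congr 1
    · refine Finset.sum_congr rfl fun a _ => ?_
      rw [integral_finset_sum _ (fun b _ => ((hint1 a b).const_mul _))]
      refine Finset.sum_congr rfl fun b _ => ?_
      rw [MeasureTheory.integral_const_mul]
      ring
    · refine Finset.sum_congr rfl fun a _ => ?_
      rw [integral_finset_sum _ (fun b _ => ((hint2 a b).const_mul _))]
      refine Finset.sum_congr rfl fun b _ => ?_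
      rw [MeasureTheory.integral_const_mul]
      ring
  · intro a _
    exact integrable_finset_sum _ fun b _ => (hint2 a b).const_mul _
  · intro a _
    exact integrable_finset_sum _ fun b _ => (hint1 a b).const_mul _
  · exact integrable_finset_sum _ fun a _ =>
      integrable_finset_sum _ fun b _ => (hint1 a b).const_mul _
  · exact integrable_finset_sum _ fun a _ =>
      integrable_finset_sum _ fun b _ => (hint2 a b).const_mul _


lemma schur_conj (i j k l : Fin n) :
    ∫ V : G, (starRingEnd ℂ) (V.1 i j) * V.1 k l ∂μ
      = if i = k ∧ j = l then ((n : ℂ))⁻¹ else 0 := by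
  have h : (fun V : G => (starRingEnd ℂ) (V.1 i j) * V.1 k l)
      = fun V : G => (starRingEnd ℂ) (V.1 i j * (starRingEnd ℂ) (V.1 k l)) := by
    funext V
    rw [RingHom.map_mul (starRingEnd ℂ), Complex.conj_conj]
  rw [h, integral_conj, schur μ i j k l]
  split <;> simp

lemma int_cc (i j k l : Fin n) :
    Integrable (fun V : G => (starRingEnd ℂ) (V.1 i j) * (starRingEnd ℂ) (V.1 k l)) μ := by
  refine integrable_of_bdd μ ((Complex.continuous_conj.comp (cont_entry i j)).mul
    (Complex.continuous_conj.comp (cont_entry k l))) 1 fun x => ?_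
  rw [norm_mul, RCLike.norm_conj, RCLike.norm_conj]
  exact mul_le_one₀ (bdd_entry x i j) (norm_nonneg _) (bdd_entry x k l)

lemma int_pp (i j k l : Fin n) :
    Integrable (fun V : G => V.1 i j * V.1 k l) μ := by
  refine integrable_of_bdd μ ((cont_entry i j).mul (cont_entry k l)) 1 fun x => ?_
  rw [norm_mul]
  exact mul_le_one₀ (bdd_entry x i j) (norm_nonneg _) (bdd_entry x k l)

lemma int_ce (i j k l : Fin n) :
    Integrable (fun V : G => (starRingEnd ℂ) (V.1 i j) * V.1 k l) μ := by
  have := int_ee μ k l i j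
  simpa [mul_comm] using this

lemma collapse (k l : Fin n) (c : Fin n → Fin n → ℂ) :
    (∑ a : Fin n, ∑ b : Fin n,
        ((n : ℂ) * c a b) * (if a = k ∧ b = l then ((n : ℂ))⁻¹ else 0)) = c k l := by
  have hn : (n : ℂ) ≠ 0 := by
    have : 0 < n := k.pos
    exact_mod_cast Nat.cast_ne_zero.mpr this.ne'
  have h : ∀ a b : Fin n, ((n : ℂ) * c a b) * (if a = k ∧ b = l then ((n : ℂ))⁻¹ else 0)
      = if a = k then (if b = l then (n : ℂ) * c a b * ((n : ℂ))⁻¹ else 0) else 0 := by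
    intro a b
    by_cases h1 : a = k <;> by_cases h2 : b = l <;> simp [h1, h2]
  simp only [h]
  have h2 : ∀ a : Fin n, (∑ b : Fin n, if a = k then if b = l then (n : ℂ) * c a b * ((n : ℂ))⁻¹ else 0 else 0)
      = if a = k then (n : ℂ) * c a l * ((n : ℂ))⁻¹ else 0 := by
    intro a
    by_cases h1 : a = k
    · simp only [h1, if_true]
      exact Finset.sum_ite_eq' Finset.univ l (fun b => (n : ℂ) * c k b * ((n : ℂ))⁻¹) ▸ by simp
    · simp [h1]
  simp only [h2]
  rw [Finset.sum_ite_eq' Finset.univ k (fun a => (n : ℂ) * c a l * ((n : ℂ))⁻¹)]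
  simp only [Finset.mem_univ, if_true]
  field_simp

lemma sum_inner1 (horth : ∀ i j k l : Fin n,
      ∫ U : G, U.1 i j * U.1 k l ∂μ = 0)
    (c d : Fin n → Fin n → ℂ) (k l : Fin n) :
    ∫ U : G, ((∑ a : Fin n, ∑ b : Fin n, ((n : ℂ) * c a b) * U.1 a b)
        + (∑ a : Fin n, ∑ b : Fin n, ((n : ℂ) * d a b) * (starRingEnd ℂ) (U.1 a b)))
      * (starRingEnd ℂ) (U.1 k l) ∂μ = c k l := by
  have horthc : ∀ a b : Fin n,
      ∫ U : G, (starRingEnd ℂ) (U.1 a b) * (starRingEnd ℂ) (U.1 k l) ∂μ = 0 := by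
    intro a b
    have h : (fun U : G => (starRingEnd ℂ) (U.1 a b) * (starRingEnd ℂ) (U.1 k l))
        = fun U : G => (starRingEnd ℂ) (U.1 a b * U.1 k l) := by
      funext U; rw [RingHom.map_mul (starRingEnd ℂ)]
    rw [h, integral_conj, horth a b k l, map_zero]
  have hpt : ∀ U : G, ((∑ a : Fin n, ∑ b : Fin n, ((n : ℂ) * c a b) * U.1 a b)
        + (∑ a : Fin n, ∑ b : Fin n, ((n : ℂ) * d a b) * (starRingEnd ℂ) (U.1 a b)))
      * (starRingEnd ℂ) (U.1 k l)
      = (∑ a : Fin n, ∑ b : Fin n, ((n : ℂ) * c a b) * (U.1 a b * (starRingEnd ℂ) (U.1 k l)))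
        + (∑ a : Fin n, ∑ b : Fin n,
            ((n : ℂ) * d a b) * ((starRingEnd ℂ) (U.1 a b) * (starRingEnd ℂ) (U.1 k l))) := by
    intro U
    rw [add_mul, Finset.sum_mul, Finset.sum_mul]
    congr 1 <;> refine Finset.sum_congr rfl fun a _ => ?_ <;>
      rw [Finset.sum_mul] <;> refine Finset.sum_congr rfl fun b _ => ?_ <;> ring
  simp only [hpt]
  have H1 : Integrable (fun U : G =>
      ∑ a : Fin n, ∑ b : Fin n, ((n : ℂ) * c a b) * (U.1 a b * (starRingEnd ℂ) (U.1 k l))) μ :=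
    integrable_finset_sum _ fun a _ =>
      integrable_finset_sum _ fun b _ => (int_ee μ a b k l).const_mul _
  have H2 : Integrable (fun U : G => ∑ a : Fin n, ∑ b : Fin n,
      ((n : ℂ) * d a b) * ((starRingEnd ℂ) (U.1 a b) * (starRingEnd ℂ) (U.1 k l))) μ :=
    integrable_finset_sum _ fun a _ =>
      integrable_finset_sum _ fun b _ => (int_cc μ a b k l).const_mul _
  rw [integral_add H1 H2]
  have e1 : (∫ U : G, ∑ a : Fin n, ∑ b : Fin n,
      ((n : ℂ) * c a b) * (U.1 a b * (starRingEnd ℂ) (U.1 k l)) ∂μ) = c k l := by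
    rw [integral_finset_sum _ (fun a _ =>
      integrable_finset_sum _ fun b _ => (int_ee μ a b k l).const_mul _)]
    have h3 : ∀ a ∈ Finset.univ, (∫ U : G, ∑ b : Fin n,
        ((n : ℂ) * c a b) * (U.1 a b * (starRingEnd ℂ) (U.1 k l)) ∂μ)
        = ∑ b : Fin n, ((n : ℂ) * c a b) * (if a = k ∧ b = l then ((n : ℂ))⁻¹ else 0) := by
      intro a _
      rw [integral_finset_sum _ (fun b _ => (int_ee μ a b k l).const_mul _)]
      exact Finset.sum_congr rfl fun b _ => by
        rw [MeasureTheory.integral_const_mul, schur μ]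
    rw [Finset.sum_congr rfl h3]
    exact collapse k l c
  have e2 : (∫ U : G, ∑ a : Fin n, ∑ b : Fin n,
      ((n : ℂ) * d a b) * ((starRingEnd ℂ) (U.1 a b) * (starRingEnd ℂ) (U.1 k l)) ∂μ) = 0 := by
    rw [integral_finset_sum _ (fun a _ =>
      integrable_finset_sum _ fun b _ => (int_cc μ a b k l).const_mul _)]
    refine Finset.sum_eq_zero fun a _ => ?_
    rw [integral_finset_sum _ (fun b _ => (int_cc μ a b k l).const_mul _)]
    refine Finset.sum_eq_zero fun b _ => ?_
    rw [MeasureTheory.integral_const_mul, horthc a b, mul_zero]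
  rw [e1, e2, add_zero]

lemma sum_inner2 (horth : ∀ i j k l : Fin n,
      ∫ U : G, U.1 i j * U.1 k l ∂μ = 0)
    (c d : Fin n → Fin n → ℂ) (k l : Fin n) :
    ∫ U : G, ((∑ a : Fin n, ∑ b : Fin n, ((n : ℂ) * c a b) * U.1 a b)
        + (∑ a : Fin n, ∑ b : Fin n, ((n : ℂ) * d a b) * (starRingEnd ℂ) (U.1 a b)))
      * U.1 k l ∂μ = d k l := by
  have hpt : ∀ U : G, ((∑ a : Fin n, ∑ b : Fin n, ((n : ℂ) * c a b) * U.1 a b)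
        + (∑ a : Fin n, ∑ b : Fin n, ((n : ℂ) * d a b) * (starRingEnd ℂ) (U.1 a b)))
      * U.1 k l
      = (∑ a : Fin n, ∑ b : Fin n, ((n : ℂ) * c a b) * (U.1 a b * U.1 k l))
        + (∑ a : Fin n, ∑ b : Fin n,
            ((n : ℂ) * d a b) * ((starRingEnd ℂ) (U.1 a b) * U.1 k l)) := by
    intro U
    rw [add_mul, Finset.sum_mul, Finset.sum_mul]
    congr 1 <;> refine Finset.sum_congr rfl fun a _ => ?_ <;>
      rw [Finset.sum_mul] <;> refine Finset.sum_congr rfl fun b _ => ?_ <;> ring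
  simp only [hpt]
  have H1 : Integrable (fun U : G =>
      ∑ a : Fin n, ∑ b : Fin n, ((n : ℂ) * c a b) * (U.1 a b * U.1 k l)) μ :=
    integrable_finset_sum _ fun a _ =>
      integrable_finset_sum _ fun b _ => (int_pp μ a b k l).const_mul _
  have H2 : Integrable (fun U : G => ∑ a : Fin n, ∑ b : Fin n,
      ((n : ℂ) * d a b) * ((starRingEnd ℂ) (U.1 a b) * U.1 k l)) μ :=
    integrable_finset_sum _ fun a _ =>
      integrable_finset_sum _ fun b _ => (int_ce μ a b k l).const_mul _
  rw [integral_add H1 H2]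
  have e1 : (∫ U : G, ∑ a : Fin n, ∑ b : Fin n,
      ((n : ℂ) * c a b) * (U.1 a b * U.1 k l) ∂μ) = 0 := by
    rw [integral_finset_sum _ (fun a _ =>
      integrable_finset_sum _ fun b _ => (int_pp μ a b k l).const_mul _)]
    refine Finset.sum_eq_zero fun a _ => ?_
    rw [integral_finset_sum _ (fun b _ => (int_pp μ a b k l).const_mul _)]
    refine Finset.sum_eq_zero fun b _ => ?_
    rw [MeasureTheory.integral_const_mul, horth a b k l, mul_zero]
  have e2 : (∫ U : G, ∑ a : Fin n, ∑ b : Fin n,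
      ((n : ℂ) * d a b) * ((starRingEnd ℂ) (U.1 a b) * U.1 k l) ∂μ) = d k l := by
    rw [integral_finset_sum _ (fun a _ =>
      integrable_finset_sum _ fun b _ => (int_ce μ a b k l).const_mul _)]
    have h3 : ∀ a ∈ Finset.univ, (∫ U : G, ∑ b : Fin n,
        ((n : ℂ) * d a b) * ((starRingEnd ℂ) (U.1 a b) * U.1 k l) ∂μ)
        = ∑ b : Fin n, ((n : ℂ) * d a b) * (if a = k ∧ b = l then ((n : ℂ))⁻¹ else 0) := by
      intro a _
      rw [integral_finset_sum _ (fun b _ => (int_ce μ a b k l).const_mul _)]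
      exact Finset.sum_congr rfl fun b _ => by
        rw [MeasureTheory.integral_const_mul, schur_conj μ]
    rw [Finset.sum_congr rfl h3]
    exact collapse k l d
  rw [e1, e2, zero_add]

lemma cont_trace_re : Continuous (fun V : G => (Matrix.trace V.1).re) := by
  have h : Continuous (fun V : G => Matrix.trace V.1) := by
    have : (fun V : G => Matrix.trace V.1) = fun V : G => ∑ a : Fin n, V.1 a a := rfl
    rw [this]
    exact continuous_finset_sum _ fun a _ => cont_entry a a
  exact Complex.continuous_re.comp h

lemma abs_trace_re_le (V : G) : |(Matrix.trace V.1).re| ≤ (n : ℝ) := by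
  have h1 : |(Matrix.trace V.1).re| ≤ ‖(Matrix.trace V.1)‖ :=
    Complex.abs_re_le_norm _
  refine h1.trans ?_
  have h2 : ‖(Matrix.trace V.1)‖ ≤ ∑ a : Fin n, ‖(V.1 a a)‖ := by
    rw [Matrix.trace]
    simpa using norm_sum_le (Finset.univ) (fun a => V.1 a a)
  refine h2.trans ?_
  calc (∑ a : Fin n, ‖(V.1 a a)‖) ≤ ∑ _a : Fin n, (1 : ℝ) :=
        Finset.sum_le_sum fun a _ => entry_norm_bound_of_unitary V.2 a a
    _ = n := by simp

lemma kernel_real (U V : G) :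
    (n : ℂ) * Matrix.trace (U.1 * (V.1)ᴴ)
        + (n : ℂ) * (starRingEnd ℂ) (Matrix.trace (U.1 * (V.1)ᴴ))
      = ((2 * (n : ℝ) * (Matrix.trace (U.1 * (V.1)ᴴ)).re : ℝ) : ℂ) := by
  rw [← mul_add, Complex.add_conj]
  push_cast
  ring

lemma trace_invariance (U : G) :
    (∫ V : G, |(Matrix.trace (U.1 * (V.1)ᴴ)).re| ∂μ)
      = ∫ V : G, |(Matrix.trace V.1).re| ∂μ := by
  have h := integral_mul_left_eq_self (μ := μ)
    (fun V : G => |(Matrix.trace (U.1 * (V.1)ᴴ)).re|) U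
  rw [← h]
  refine integral_congr_ae (Filter.Eventually.of_forall fun W => ?_)
  have h1 : Matrix.trace (U.1 * ((U * W).1)ᴴ) = Matrix.trace ((W.1)ᴴ) := by
    rw [Matrix.UnitaryGroup.mul_val, Matrix.conjTranspose_mul, ← Matrix.mul_assoc,
      Matrix.trace_mul_comm, ← Matrix.mul_assoc]
    have h2 : (U.1)ᴴ * U.1 = 1 := by
      rw [← Matrix.star_eq_conjTranspose]
      exact U.2.1
    rw [h2, Matrix.one_mul]
  show |(Matrix.trace (U.1 * ((U * W).1)ᴴ)).re| = |(Matrix.trace W.1).re|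
  rw [h1, Matrix.trace_conjTranspose]
  have : (star (Matrix.trace W.1) : ℂ).re = (Matrix.trace W.1).re := Complex.conj_re _
  rw [this]

lemma norm_kernel_integral (U : G) :
    (∫ V : G, ‖((n : ℂ) * Matrix.trace (U.1 * (V.1)ᴴ)
        + (n : ℂ) * (starRingEnd ℂ) (Matrix.trace (U.1 * (V.1)ᴴ)))‖ ∂μ)
      = 2 * (n : ℝ) * ∫ V : G, |(Matrix.trace V.1).re| ∂μ := by
  have h : ∀ V : G, ‖((n : ℂ) * Matrix.trace (U.1 * (V.1)ᴴ)
        + (n : ℂ) * (starRingEnd ℂ) (Matrix.trace (U.1 * (V.1)ᴴ)))‖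
      = 2 * (n : ℝ) * |(Matrix.trace (U.1 * (V.1)ᴴ)).re| := by
    intro V
    rw [kernel_real, Complex.norm_real, Real.norm_eq_abs, abs_mul]
    have : |2 * (n : ℝ)| = 2 * (n : ℝ) := abs_of_nonneg (by positivity)
    rw [this]
  simp only [h]
  rw [MeasureTheory.integral_const_mul, trace_invariance μ U]

lemma cont_kernel (U : G) : Continuous (fun V : G =>
    (n : ℂ) * Matrix.trace (U.1 * (V.1)ᴴ)
      + (n : ℂ) * (starRingEnd ℂ) (Matrix.trace (U.1 * (V.1)ᴴ))) := by
  have ht : Continuous (fun V : G => Matrix.trace (U.1 * (V.1)ᴴ)) := by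
    simp only [trace_expand]
    exact continuous_finset_sum _ fun a _ => continuous_finset_sum _ fun b _ =>
      continuous_const.mul (Complex.continuous_conj.comp (cont_entry a b))
  exact (continuous_const.mul ht).add
    (continuous_const.mul (Complex.continuous_conj.comp ht))

lemma abs_re_trace_mul_le (U V : G) : |(Matrix.trace (U.1 * (V.1)ᴴ)).re| ≤ (n : ℝ) := by
  have h : U.1 * (V.1)ᴴ = ((U * V⁻¹ : G) : Matrix (Fin n) (Fin n) ℂ) := by
    rw [Matrix.UnitaryGroup.mul_val, Matrix.UnitaryGroup.inv_val,
      Matrix.star_eq_conjTranspose]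
  rw [h]
  exact abs_trace_re_le (U * V⁻¹)

lemma norm_kernel (U V : G) :
    ‖((n : ℂ) * Matrix.trace (U.1 * (V.1)ᴴ)
        + (n : ℂ) * (starRingEnd ℂ) (Matrix.trace (U.1 * (V.1)ᴴ)))‖
      = 2 * (n : ℝ) * |(Matrix.trace (U.1 * (V.1)ᴴ)).re| := by
  rw [kernel_real, Complex.norm_real, Real.norm_eq_abs, abs_mul]
  have : |2 * (n : ℝ)| = 2 * (n : ℝ) := abs_of_nonneg (by positivity)
  rw [this]

lemma integrable_kernel (U : G) : Integrable (fun V : G =>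
    (n : ℂ) * Matrix.trace (U.1 * (V.1)ᴴ)
      + (n : ℂ) * (starRingEnd ℂ) (Matrix.trace (U.1 * (V.1)ᴴ))) μ := by
  refine integrable_of_bdd μ (cont_kernel U) (2 * (n : ℝ) * (n : ℝ)) fun V => ?_
  rw [norm_kernel]
  have := abs_re_trace_mul_le U V
  nlinarith [abs_nonneg ((Matrix.trace (U.1 * (V.1)ᴴ)).re)]

lemma upper_bound (f : G → ℂ) (hfb : ∀ U : G, ‖(f U)‖ ≤ 1) (U : G) :
    ‖(∫ V : G, f V * ((n : ℂ) * Matrix.trace (U.1 * (V.1)ᴴ)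
        + (n : ℂ) * (starRingEnd ℂ) (Matrix.trace (U.1 * (V.1)ᴴ))) ∂μ)‖
      ≤ 2 * (n : ℝ) * ∫ V : G, |(Matrix.trace V.1).re| ∂μ := by
  refine (norm_integral_le_integral_norm _).trans ?_
  rw [← norm_kernel_integral μ U]
  refine integral_mono_of_nonneg (Filter.Eventually.of_forall fun V => norm_nonneg _)
    (integrable_kernel μ U).norm (Filter.Eventually.of_forall fun V => ?_)
  show ‖f V * ((n : ℂ) * Matrix.trace (U.1 * (V.1)ᴴ)
        + (n : ℂ) * (starRingEnd ℂ) (Matrix.trace (U.1 * (V.1)ᴴ)))‖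
      ≤ ‖((n : ℂ) * Matrix.trace (U.1 * (V.1)ᴴ)
        + (n : ℂ) * (starRingEnd ℂ) (Matrix.trace (U.1 * (V.1)ᴴ)))‖
  rw [norm_mul]
  exact mul_le_of_le_one_left (norm_nonneg _)
    (hfb V)

lemma integrable_of_bdd_real {g : (Matrix.unitaryGroup (Fin n) ℂ) → ℝ} (hc : Continuous g)
    (C : ℝ) (hb : ∀ x, |g x| ≤ C) : Integrable g μ :=
  (integrable_const C).mono' hc.aestronglyMeasurable
    (Filter.Eventually.of_forall fun x => by rw [Real.norm_eq_abs]; exact hb x)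

lemma integrable_abs_trace_re : Integrable (fun V : G => |(Matrix.trace V.1).re|) μ :=
  integrable_of_bdd_real μ (cont_trace_re.abs) (n : ℝ)
    (fun V => by rw [_root_.abs_abs]; exact abs_trace_re_le V)

lemma lower_bound (t : ℝ) (ht : 0 < t) :
    2 * (n : ℝ) * (∫ V : G, |(Matrix.trace V.1).re| ∂μ) - 2 * (n : ℝ) * t
      ≤ ‖(∫ V : G,
          ((((Matrix.trace V.1).re / (|(Matrix.trace V.1).re| + t) : ℝ)) : ℂ)
          * ((n : ℂ) * Matrix.trace ((1 : G).1 * (V.1)ᴴ)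
            + (n : ℂ) * (starRingEnd ℂ) (Matrix.trace ((1 : G).1 * (V.1)ᴴ))) ∂μ)‖ := by
  set x : G → ℝ := fun V => (Matrix.trace V.1).re with hx
  have hker : ∀ V : G, ((n : ℂ) * Matrix.trace ((1 : G).1 * (V.1)ᴴ)
      + (n : ℂ) * (starRingEnd ℂ) (Matrix.trace ((1 : G).1 * (V.1)ᴴ)))
      = ((2 * (n : ℝ) * x V : ℝ) : ℂ) := by
    intro V
    rw [kernel_real]
    congr 2
    show (Matrix.trace ((1 : G).1 * (V.1)ᴴ)).re = (Matrix.trace V.1).re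
    rw [Matrix.UnitaryGroup.one_val, Matrix.one_mul, Matrix.trace_conjTranspose]
    exact Complex.conj_re _
  have hpt : ∀ V : G, ((x V / (|x V| + t) : ℝ) : ℂ)
      * ((n : ℂ) * Matrix.trace ((1 : G).1 * (V.1)ᴴ)
        + (n : ℂ) * (starRingEnd ℂ) (Matrix.trace ((1 : G).1 * (V.1)ᴴ)))
      = (((x V / (|x V| + t)) * (2 * (n : ℝ) * x V) : ℝ) : ℂ) := by
    intro V
    rw [hker V, ← Complex.ofReal_mul]
  rw [integral_congr_ae (Filter.Eventually.of_forall hpt)]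
  rw [show (∫ V : G, ((x V / (|x V| + t) * (2 * (n:ℝ) * x V) : ℝ) : ℂ) ∂μ)
    = ((∫ V : G, x V / (|x V| + t) * (2 * (n:ℝ) * x V) ∂μ : ℝ) : ℂ) from integral_ofReal]
  set g : G → ℝ := fun V => (x V / (|x V| + t)) * (2 * (n : ℝ) * x V) with hg
  have hgcont : Continuous g := by
    apply Continuous.mul
    · exact cont_trace_re.div ((cont_trace_re.abs).add continuous_const)
        (fun V => by positivity)
    · exact continuous_const.mul cont_trace_re
  have hgbdd : ∀ V, |g V| ≤ 2 * (n : ℝ) * (n : ℝ) := by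
    intro V
    rw [hg]
    have h1 : |x V / (|x V| + t)| ≤ 1 := by
      rw [abs_div, _root_.abs_of_nonneg (by positivity : (0:ℝ) ≤ |x V| + t)]
      rw [div_le_one (by positivity)]
      linarith [le_of_eq (rfl : |x V| = |x V|), ht.le]
    have h2 : |2 * (n : ℝ) * x V| ≤ 2 * (n : ℝ) * (n : ℝ) := by
      rw [abs_mul, _root_.abs_of_nonneg (by positivity : (0:ℝ) ≤ 2 * (n:ℝ))]
      have := abs_trace_re_le V
      nlinarith
    calc |x V / (|x V| + t) * (2 * (n : ℝ) * x V)|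
        = |x V / (|x V| + t)| * |2 * (n : ℝ) * x V| := abs_mul _ _
      _ ≤ 1 * (2 * (n : ℝ) * (n : ℝ)) := mul_le_mul h1 h2 (abs_nonneg _) zero_le_one
      _ = 2 * (n : ℝ) * (n : ℝ) := one_mul _
  have hgint : Integrable g μ := integrable_of_bdd_real μ hgcont _ hgbdd
  have hlow : ∀ V : G, 2 * (n : ℝ) * (|x V| - t) ≤ g V := by
    intro V
    rw [hg]
    have hd : 0 < |x V| + t := by positivity
    have key : |x V| - t ≤ x V / (|x V| + t) * x V := by
      rw [div_mul_eq_mul_div, le_div_iff₀ hd]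
      nlinarith [_root_.sq_abs (x V), sq_nonneg t]
    nlinarith [key]
  have hint2 : Integrable (fun V : G => 2 * (n : ℝ) * (|x V| - t)) μ :=
    (((integrable_abs_trace_re μ).sub (integrable_const t)).const_mul _)
  have h5 : (∫ V : G, 2 * (n : ℝ) * (|x V| - t) ∂μ)
      = 2 * (n : ℝ) * (∫ V : G, |x V| ∂μ) - 2 * (n : ℝ) * t := by
    rw [MeasureTheory.integral_const_mul, integral_sub (integrable_abs_trace_re μ)
      (integrable_const t), integral_const]
    simp [mul_sub, hx]
  have h6 : 2 * (n : ℝ) * (∫ V : G, |x V| ∂μ) - 2 * (n : ℝ) * t ≤ ∫ V : G, g V ∂μ := by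
    rw [← h5]
    exact integral_mono hint2 hgint hlow
  calc 2 * (n : ℝ) * (∫ V : G, |x V| ∂μ) - 2 * (n : ℝ) * t
      ≤ ∫ V : G, g V ∂μ := h6
    _ ≤ |∫ V : G, g V ∂μ| := le_abs_self _
    _ = ‖(((∫ V : G, g V ∂μ : ℝ)) : ℂ)‖ := by
        rw [Complex.norm_real, Real.norm_eq_abs]
    _ = _ := rfl

end Proj19

open MeasureTheory Matrix

/-- If the subspaces `H_{(1,0)} = span{U ↦ u_{ij}}` and
`H_{(0,1)} = span{U ↦ conj u_{ij}}` of `L²(U(n))` are orthogonal, then the orthogonal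
projection onto their direct sum is given by convolution with `n·tr + n·conj tr`, and its norm
as an operator on `C(U(n))` (sup norm) equals `2n ∫ |Re (tr V)| dV`. -/
theorem projection_sum_span_and_norm (n : ℕ)
    [MeasurableSpace (Matrix.unitaryGroup (Fin n) ℂ)]
    [BorelSpace (Matrix.unitaryGroup (Fin n) ℂ)]
    (μ : Measure (Matrix.unitaryGroup (Fin n) ℂ))
    [μ.IsHaarMeasure] [IsProbabilityMeasure μ]
    -- the two subspaces are orthogonal in `L²(U(n))`:
    (horth : ∀ i j k l : Fin n,
      ∫ U : Matrix.unitaryGroup (Fin n) ℂ, U.1 i j * U.1 k l ∂μ = 0) :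
    -- (a) convolution with `n·tr + n·conj tr` is the orthogonal projection onto the sum:
    (∀ f : Matrix.unitaryGroup (Fin n) ℂ → ℂ, MemLp f 2 μ →
      ((fun U : Matrix.unitaryGroup (Fin n) ℂ =>
          ∫ V, f V * ((n : ℂ) * Matrix.trace (U.1 * (V.1)ᴴ)
            + (n : ℂ) * (starRingEnd ℂ) (Matrix.trace (U.1 * (V.1)ᴴ))) ∂μ)
        ∈ (Submodule.span ℂ {g : Matrix.unitaryGroup (Fin n) ℂ → ℂ |
              ∃ i j, g = fun U => U.1 i j}
            ⊔ Submodule.span ℂ {g : Matrix.unitaryGroup (Fin n) ℂ → ℂ |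
              ∃ i j, g = fun U => (starRingEnd ℂ) (U.1 i j)})) ∧
      (∀ h ∈ (Submodule.span ℂ {g : Matrix.unitaryGroup (Fin n) ℂ → ℂ |
              ∃ i j, g = fun U => U.1 i j}
            ⊔ Submodule.span ℂ {g : Matrix.unitaryGroup (Fin n) ℂ → ℂ |
              ∃ i j, g = fun U => (starRingEnd ℂ) (U.1 i j)}),
        ∫ U, (f U - ∫ V, f V * ((n : ℂ) * Matrix.trace (U.1 * (V.1)ᴴ)
              + (n : ℂ) * (starRingEnd ℂ) (Matrix.trace (U.1 * (V.1)ᴴ))) ∂μ)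
            * (starRingEnd ℂ) (h U) ∂μ = 0)) ∧
    -- (b) the norm of the projection on `C(U(n))` equals `2n ∫ |Re (tr V)| dV`:
    (⨆ f : {f : C(Matrix.unitaryGroup (Fin n) ℂ, ℂ) // ∀ U, ‖f U‖ ≤ 1},
        ⨆ U : Matrix.unitaryGroup (Fin n) ℂ,
          ‖(∫ V, f.1 V * ((n : ℂ) * Matrix.trace (U.1 * (V.1)ᴴ)
            + (n : ℂ) * (starRingEnd ℂ) (Matrix.trace (U.1 * (V.1)ᴴ))) ∂μ)‖)
      = 2 * n * ∫ V : Matrix.unitaryGroup (Fin n) ℂ, |(Matrix.trace V.1).re| ∂μ := by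
  constructor
  · intro f hf
    have hfi : Integrable f μ := memLp_one_iff_integrable.mp
      (hf.mono_exponent (by norm_num))
    have hform := Proj19.proj_formula μ f hfi
    have hint_entry : ∀ a b : Fin n,
        Integrable (fun U : Matrix.unitaryGroup (Fin n) ℂ => U.1 a b) μ :=
      fun a b => Proj19.integrable_of_bdd μ (Proj19.cont_entry a b) 1
        (fun x => entry_norm_bound_of_unitary x.2 a b)
    have hint_centry : ∀ a b : Fin n,
        Integrable (fun U : Matrix.unitaryGroup (Fin n) ℂ => (starRingEnd ℂ) (U.1 a b)) μ :=
      fun a b => Proj19.integrable_of_bdd μ (Proj19.cont_centry a b) 1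
        (fun x => Proj19.bdd_centry x a b)
    have hPint : Integrable (fun U : Matrix.unitaryGroup (Fin n) ℂ =>
        (∑ a : Fin n, ∑ b : Fin n,
          ((n : ℂ) * (∫ V, f V * (starRingEnd ℂ) (V.1 a b) ∂μ)) * U.1 a b)
        + (∑ a : Fin n, ∑ b : Fin n,
          ((n : ℂ) * (∫ V, f V * V.1 a b ∂μ)) * (starRingEnd ℂ) (U.1 a b))) μ := by
      refine Integrable.add ?_ ?_
      · exact integrable_finset_sum _ fun a _ =>
          integrable_finset_sum _ fun b _ => (hint_entry a b).const_mul _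
      · exact integrable_finset_sum _ fun a _ =>
          integrable_finset_sum _ fun b _ => (hint_centry a b).const_mul _
    constructor
    · -- membership
      have heq : (fun U : Matrix.unitaryGroup (Fin n) ℂ =>
          ∫ V, f V * ((n : ℂ) * Matrix.trace (U.1 * (V.1)ᴴ)
            + (n : ℂ) * (starRingEnd ℂ) (Matrix.trace (U.1 * (V.1)ᴴ))) ∂μ)
          = (fun U : Matrix.unitaryGroup (Fin n) ℂ =>
            (∑ a : Fin n, ∑ b : Fin n,
              ((n : ℂ) * (∫ V, f V * (starRingEnd ℂ) (V.1 a b) ∂μ)) * U.1 a b)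
            + (∑ a : Fin n, ∑ b : Fin n,
              ((n : ℂ) * (∫ V, f V * V.1 a b ∂μ)) * (starRingEnd ℂ) (U.1 a b))) :=
        funext hform
      rw [heq]
      refine Submodule.add_mem _ ?_ ?_
      · have hfun1 : (fun U : Matrix.unitaryGroup (Fin n) ℂ =>
            ∑ a : Fin n, ∑ b : Fin n,
              ((n : ℂ) * (∫ V, f V * (starRingEnd ℂ) (V.1 a b) ∂μ)) * U.1 a b)
            = ∑ a : Fin n, ∑ b : Fin n,
              ((n : ℂ) * (∫ V, f V * (starRingEnd ℂ) (V.1 a b) ∂μ))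
                • (fun U : Matrix.unitaryGroup (Fin n) ℂ => U.1 a b) := by
          funext U
          simp [Finset.sum_apply, Pi.smul_apply, smul_eq_mul]
        rw [hfun1]
        refine Submodule.mem_sup_left (Submodule.sum_mem _ fun a _ =>
          Submodule.sum_mem _ fun b _ => ?_)
        exact Submodule.smul_mem _ _ (Submodule.subset_span ⟨a, b, rfl⟩)
      · have hfun2 : (fun U : Matrix.unitaryGroup (Fin n) ℂ =>
            ∑ a : Fin n, ∑ b : Fin n,
              ((n : ℂ) * (∫ V, f V * V.1 a b ∂μ)) * (starRingEnd ℂ) (U.1 a b))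
            = ∑ a : Fin n, ∑ b : Fin n,
              ((n : ℂ) * (∫ V, f V * V.1 a b ∂μ))
                • (fun U : Matrix.unitaryGroup (Fin n) ℂ => (starRingEnd ℂ) (U.1 a b)) := by
          funext U
          simp [Finset.sum_apply, Pi.smul_apply, smul_eq_mul]
        rw [hfun2]
        refine Submodule.mem_sup_right (Submodule.sum_mem _ fun a _ =>
          Submodule.sum_mem _ fun b _ => ?_)
        exact Submodule.smul_mem _ _ (Submodule.subset_span ⟨a, b, rfl⟩)
    · -- orthogonality
      intro h hmem
      rw [← Submodule.span_union] at hmem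
      simp only [hform]
      set P : Matrix.unitaryGroup (Fin n) ℂ → ℂ := fun U =>
        (∑ a : Fin n, ∑ b : Fin n,
          ((n : ℂ) * (∫ V, f V * (starRingEnd ℂ) (V.1 a b) ∂μ)) * U.1 a b)
        + (∑ a : Fin n, ∑ b : Fin n,
          ((n : ℂ) * (∫ V, f V * V.1 a b ∂μ)) * (starRingEnd ℂ) (U.1 a b)) with hP
      have main := Submodule.span_induction
        (p := fun (h : Matrix.unitaryGroup (Fin n) ℂ → ℂ) _ =>
          Integrable (fun U => (f U - P U) * (starRingEnd ℂ) (h U)) μ ∧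
          ∫ U, (f U - P U) * (starRingEnd ℂ) (h U) ∂μ = 0)
        ?_ ?_ ?_ ?_ hmem
      · exact main.2
      · -- generators
        rintro x (⟨k, l, rfl⟩ | ⟨k, l, rfl⟩)
        · constructor
          · exact Proj19.integrable_mul_bdd μ (hfi.sub hPint)
              (Proj19.cont_centry k l) 1 (fun x => Proj19.bdd_centry x k l)
          · simp only [sub_mul]
            rw [integral_sub
              (Proj19.integrable_mul_bdd μ hfi
                (Proj19.cont_centry k l) 1 (fun x => Proj19.bdd_centry x k l))
              (Proj19.integrable_mul_bdd μ hPint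
                (Proj19.cont_centry k l) 1 (fun x => Proj19.bdd_centry x k l))]
            rw [hP]
            rw [Proj19.sum_inner1 μ horth
              (fun a b => ∫ V, f V * (starRingEnd ℂ) (V.1 a b) ∂μ)
              (fun a b => ∫ V, f V * V.1 a b ∂μ) k l]
            exact sub_self _
        · constructor
          · have hcc : Continuous (fun U : Matrix.unitaryGroup (Fin n) ℂ =>
                (starRingEnd ℂ) ((starRingEnd ℂ) (U.1 k l))) :=
              Complex.continuous_conj.comp (Proj19.cont_centry k l)
            exact Proj19.integrable_mul_bdd μ (hfi.sub hPint) hcc 1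
              (fun x => by rw [RCLike.norm_conj]; exact Proj19.bdd_centry x k l)
          · simp only [Complex.conj_conj, sub_mul]
            rw [integral_sub
              (Proj19.integrable_mul_bdd μ hfi (Proj19.cont_entry k l) 1
                (fun x => entry_norm_bound_of_unitary x.2 k l))
              (Proj19.integrable_mul_bdd μ hPint (Proj19.cont_entry k l) 1
                (fun x => entry_norm_bound_of_unitary x.2 k l))]
            rw [hP]
            rw [Proj19.sum_inner2 μ horth
              (fun a b => ∫ V, f V * (starRingEnd ℂ) (V.1 a b) ∂μ)
              (fun a b => ∫ V, f V * V.1 a b ∂μ) k l]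
            exact sub_self _
      · -- zero
        constructor
        · simpa using (integrable_zero _ ℂ μ)
        · simp
      · -- add
        rintro x y hx hy ⟨hix, hx0⟩ ⟨hiy, hy0⟩
        constructor
        · have : (fun U => (f U - P U) * (starRingEnd ℂ) ((x + y) U))
              = fun U => (f U - P U) * (starRingEnd ℂ) (x U)
                + (f U - P U) * (starRingEnd ℂ) (y U) := by
            funext U
            simp [map_add, mul_add]
          rw [this]
          exact hix.add hiy
        · have : (fun U => (f U - P U) * (starRingEnd ℂ) ((x + y) U))
              = fun U => (f U - P U) * (starRingEnd ℂ) (x U)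
                + (f U - P U) * (starRingEnd ℂ) (y U) := by
            funext U
            simp [map_add, mul_add]
          simp only [this]
          rw [integral_add hix hiy, hx0, hy0, add_zero]
      · -- smul
        rintro a x hx ⟨hix, hx0⟩
        have heq2 : (fun U => (f U - P U) * (starRingEnd ℂ) ((a • x) U))
            = fun U => (starRingEnd ℂ) a * ((f U - P U) * (starRingEnd ℂ) (x U)) := by
          funext U
          rw [Pi.smul_apply, smul_eq_mul, RingHom.map_mul (starRingEnd ℂ)]
          ring
        constructor
        · rw [heq2]
          exact hix.const_mul _
        · simp only [heq2]
          rw [MeasureTheory.integral_const_mul, hx0, mul_zero]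
  · -- part (b)
    set T := ∫ V : Matrix.unitaryGroup (Fin n) ℂ, |(Matrix.trace V.1).re| ∂μ with hT
    have hne : Nonempty (Matrix.unitaryGroup (Fin n) ℂ) := ⟨1⟩
    have hfne : Nonempty {f : C(Matrix.unitaryGroup (Fin n) ℂ, ℂ) //
        ∀ U, ‖(f U)‖ ≤ 1} :=
      ⟨⟨0, fun U => by simp⟩⟩
    have hub : ∀ (fp : {f : C(Matrix.unitaryGroup (Fin n) ℂ, ℂ) //
          ∀ U, ‖(f U)‖ ≤ 1}) (U : Matrix.unitaryGroup (Fin n) ℂ),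
        ‖(∫ V, fp.1 V * ((n : ℂ) * Matrix.trace (U.1 * (V.1)ᴴ)
          + (n : ℂ) * (starRingEnd ℂ) (Matrix.trace (U.1 * (V.1)ᴴ))) ∂μ)‖
          ≤ 2 * (n : ℝ) * T :=
      fun fp U => Proj19.upper_bound μ fp.1 fp.2 U
    have hbddin : ∀ fp : {f : C(Matrix.unitaryGroup (Fin n) ℂ, ℂ) //
          ∀ U, ‖(f U)‖ ≤ 1},
        BddAbove (Set.range fun U : Matrix.unitaryGroup (Fin n) ℂ =>
          ‖(∫ V, fp.1 V * ((n : ℂ) * Matrix.trace (U.1 * (V.1)ᴴ)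
            + (n : ℂ) * (starRingEnd ℂ) (Matrix.trace (U.1 * (V.1)ᴴ))) ∂μ)‖) := by
      intro fp
      refine ⟨2 * (n : ℝ) * T, ?_⟩
      rintro y ⟨U, rfl⟩
      exact hub fp U
    have hbddout : BddAbove (Set.range fun fp : {f : C(Matrix.unitaryGroup (Fin n) ℂ, ℂ) //
          ∀ U, ‖(f U)‖ ≤ 1} =>
        ⨆ U : Matrix.unitaryGroup (Fin n) ℂ,
          ‖(∫ V, fp.1 V * ((n : ℂ) * Matrix.trace (U.1 * (V.1)ᴴ)
            + (n : ℂ) * (starRingEnd ℂ) (Matrix.trace (U.1 * (V.1)ᴴ))) ∂μ)‖) := by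
      refine ⟨2 * (n : ℝ) * T, ?_⟩
      rintro y ⟨fp, rfl⟩
      exact ciSup_le fun U => hub fp U
    refine le_antisymm (ciSup_le fun fp => ciSup_le fun U => hub fp U) ?_
    refine le_of_forall_pos_le_add fun ε hε => ?_
    set t : ℝ := ε / (2 * (n : ℝ) + 1) with htdef
    have ht : 0 < t := by positivity
    have h2nt : 2 * (n : ℝ) * t ≤ ε := by
      rw [htdef]
      rw [div_eq_mul_inv, ← mul_assoc]
      rw [show (2 : ℝ) * (n : ℝ) * ε * (2 * (n : ℝ) + 1)⁻¹
        = ε * ((2 * (n : ℝ)) / (2 * (n : ℝ) + 1)) from by ring]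
      have hle : (2 * (n : ℝ)) / (2 * (n : ℝ) + 1) ≤ 1 := by
        rw [div_le_one (by positivity)]
        linarith
      nlinarith
    have hcont : Continuous (fun V : Matrix.unitaryGroup (Fin n) ℂ =>
        (((Matrix.trace V.1).re / (|(Matrix.trace V.1).re| + t) : ℝ) : ℂ)) := by
      refine Complex.continuous_ofReal.comp ?_
      exact Proj19.cont_trace_re.div ((Proj19.cont_trace_re.abs).add continuous_const)
        (fun V => by positivity)
    have hb1 : ∀ U : Matrix.unitaryGroup (Fin n) ℂ,
        ‖((((Matrix.trace U.1).re / (|(Matrix.trace U.1).re| + t) : ℝ) : ℂ))‖ ≤ 1 := by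
      intro U
      rw [Complex.norm_real, Real.norm_eq_abs, abs_div,
        _root_.abs_of_nonneg (by positivity : (0:ℝ) ≤ |(Matrix.trace U.1).re| + t),
        div_le_one (by positivity)]
      linarith
    set fp : {f : C(Matrix.unitaryGroup (Fin n) ℂ, ℂ) // ∀ U, ‖(f U)‖ ≤ 1} :=
      ⟨⟨fun V => (((Matrix.trace V.1).re / (|(Matrix.trace V.1).re| + t) : ℝ) : ℂ), hcont⟩,
        hb1⟩ with hfp
    have hlow := Proj19.lower_bound μ t ht
    have hchain : 2 * (n : ℝ) * T - 2 * (n : ℝ) * t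
        ≤ ⨆ fp : {f : C(Matrix.unitaryGroup (Fin n) ℂ, ℂ) // ∀ U, ‖(f U)‖ ≤ 1},
          ⨆ U : Matrix.unitaryGroup (Fin n) ℂ,
            ‖(∫ V, fp.1 V * ((n : ℂ) * Matrix.trace (U.1 * (V.1)ᴴ)
              + (n : ℂ) * (starRingEnd ℂ) (Matrix.trace (U.1 * (V.1)ᴴ))) ∂μ)‖ := by
      refine hlow.trans ?_
      refine le_trans ?_ (le_ciSup hbddout fp)
      exact le_ciSup (hbddin fp) (1 : Matrix.unitaryGroup (Fin n) ℂ)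
    linarith
end
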